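/- Mixed-monotonicity reachability via sensitivity bounds (Lemma 9): let x̲ ≤ x̄ in ℝⁿ and let Φ : [x̲,x̄] → ℝⁿ be differentiable on the box with Jacobian DΦ(x) ∈ ℝ^{n×n} satisfying S̲ ≤ DΦ(x) ≤ S̄ entrywise for all x ∈ [x̲,x̄]. Let S* = (S̲ + S̄)/2. For each i ∈ {1,…,n} and x, y ∈ ℝⁿ define z^i(x,y) ∈ ℝⁿ and α^i ∈ ℝ^{1×n} componentwise by: (z^i_j, α^i_j) = (x_j, max(0, −S̲_{ij})) if S*_{ij} ≥ 0, and (z^i_j, α^i_j) = (y_j, max(0, S̄_{ij})) if S*_{ij} < 0; and set g_i(x,y) = Φ_i(z^i(x,y)) + α^i (x − y). Then for every w ∈ [x̲,x̄] and every i ∈ {1,…,n}: g_i(x̲, x̄) ≤ Φ_i(w) ≤ g_i(x̄, x̲). -/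

import Mathlib

/-- The vertex `z^i(x,y)` of the mixed-monotonicity decomposition: component `j` is `x_j`
if `S*_{ij} = (S̲_{ij}+S̄_{ij})/2 ≥ 0`, and `y_j` otherwise. -/
noncomputable def mmVertex {n : ℕ} (Sl Su : Fin n → Fin n → ℝ) (i : Fin n) (x y : Fin n → ℝ) :
    Fin n → ℝ :=
  fun j => if 0 ≤ (Sl i j + Su i j) / 2 then x j else y j

/-- The coefficient row vector `α^i` of the mixed-monotonicity decomposition: component `j`
is `max(0, −S̲_{ij})` if `S*_{ij} = (S̲_{ij}+S̄_{ij})/2 ≥ 0`, and `max(0, S̄_{ij})`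
otherwise. -/
noncomputable def mmAlpha {n : ℕ} (Sl Su : Fin n → Fin n → ℝ) (i j : Fin n) : ℝ :=
  if 0 ≤ (Sl i j + Su i j) / 2 then max 0 (-Sl i j) else max 0 (Su i j)

/-- The decomposition function `g_i(x,y) = Φ_i(z^i(x,y)) + α^i (x − y)`. -/
noncomputable def mmG {n : ℕ} (Φ : (Fin n → ℝ) → Fin n → ℝ) (Sl Su : Fin n → Fin n → ℝ)
    (i : Fin n) (x y : Fin n → ℝ) : ℝ :=
  Φ (mmVertex Sl Su i x y) i + ∑ j : Fin n, mmAlpha Sl Su i j * (x j - y j)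

lemma mm_core {n : ℕ} (xl xu : Fin n → ℝ) (f : (Fin n → ℝ) → ℝ) (b : Fin n → ℝ)
    (z w : Fin n → ℝ) (hz : z ∈ Set.Icc xl xu) (hw : w ∈ Set.Icc xl xu)
    (hf : ∀ x ∈ Set.Icc xl xu, ∃ L : (Fin n → ℝ) →L[ℝ] ℝ,
      HasFDerivWithinAt f L (Set.Icc xl xu) x ∧
      ∀ j, b j * (z j - w j) ≤ L (Pi.single j 1) * (z j - w j)) :
    ∑ j, b j * (z j - w j) ≤ f z - f w := by
  set S := Set.Icc xl xu with hS
  have hconv : Convex ℝ S := convex_Icc _ _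
  set c := ∑ j, b j * (z j - w j) with hc
  set γ : ℝ → (Fin n → ℝ) := fun t => w + t • (z - w) with hγ
  have hγmem : Set.MapsTo γ (Set.Icc (0:ℝ) 1) S := fun t ht =>
    hconv.add_smul_sub_mem hw hz ht
  have hγderiv : ∀ t : ℝ, HasDerivAt γ (z - w) t := by
    intro t
    have h1 := ((hasDerivAt_id t).smul_const (z - w)).const_add w
    rw [one_smul] at h1
    exact h1
  have hvdecomp : z - w = ∑ j, (z j - w j) • (Pi.single j 1 : Fin n → ℝ) := by
    ext k
    simp [Pi.single_apply, Finset.sum_apply]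
  have key : ∀ t ∈ Set.Icc (0:ℝ) 1,
      ∃ d : ℝ, HasDerivWithinAt (fun s => f (γ s) - s * c) d (Set.Icc 0 1) t ∧ 0 ≤ d := by
    intro t ht
    obtain ⟨L, hL, hLb⟩ := hf (γ t) (hγmem ht)
    have hcomp : HasDerivWithinAt (fun s => f (γ s)) (L (z - w)) (Set.Icc 0 1) t :=
      hL.comp_hasDerivWithinAt t ((hγderiv t).hasDerivWithinAt) hγmem
    have hLc : c ≤ L (z - w) := by
      have : L (z - w) = ∑ j, (z j - w j) * L (Pi.single j 1) := by
        rw [hvdecomp, map_sum]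
        simp
      rw [this]
      exact Finset.sum_le_sum fun j _ => by
        have := hLb j; linarith [hLb j]
    refine ⟨L (z - w) - c, ?_, by linarith⟩
    have h2 := hcomp.sub (((hasDerivAt_id t).mul_const c).hasDerivWithinAt (s := Set.Icc 0 1))
    rw [one_mul] at h2
    exact h2
  choose! d hd hd0 using key
  have hcont : ContinuousOn (fun s => f (γ s) - s * c) (Set.Icc 0 1) :=
    fun t ht => (hd t ht).continuousWithinAt
  have hmono : MonotoneOn (fun s => f (γ s) - s * c) (Set.Icc 0 1) := by
    refine monotoneOn_of_hasDerivWithinAt_nonneg (convex_Icc 0 1) hcont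
      (fun t ht => ((hd t (interior_subset ht)).mono interior_subset)) ?_
    exact fun t ht => hd0 t (interior_subset ht)
  have h01 := hmono (Set.left_mem_Icc.2 zero_le_one) (Set.right_mem_Icc.2 zero_le_one) zero_le_one
  have hγ0 : γ 0 = w := by simp [hγ]
  have hγ1 : γ 1 = z := by simp [hγ]
  simp only at h01
  rw [hγ0, hγ1] at h01
  linarith

/-- **Mixed-monotonicity reachability via sensitivity bounds** (Lemma 9).
If `Φ : [x̲,x̄] → ℝⁿ` is differentiable on the box with Jacobian bounded entrywise by
`S̲ ≤ DΦ(x) ≤ S̄` for all `x` in the box, then with the decomposition function `g` built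
from `[S̲,S̄]`, every `w ∈ [x̲,x̄]` satisfies `g(x̲,x̄) ≤ Φ(w) ≤ g(x̄,x̲)` componentwise. -/
theorem mixed_monotonicity_reachability {n : ℕ}
    (xl xu : Fin n → ℝ) (hx : xl ≤ xu)
    (Φ : (Fin n → ℝ) → Fin n → ℝ)
    (Sl Su : Fin n → Fin n → ℝ)
    (hΦ : ∀ x ∈ Set.Icc xl xu, ∀ i : Fin n,
      ∃ L : (Fin n → ℝ) →L[ℝ] ℝ,
        HasFDerivWithinAt (fun w => Φ w i) L (Set.Icc xl xu) x ∧
        ∀ j, Sl i j ≤ L (Pi.single j 1) ∧ L (Pi.single j 1) ≤ Su i j) :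
    ∀ w ∈ Set.Icc xl xu, ∀ i : Fin n,
      mmG Φ Sl Su i xl xu ≤ Φ w i ∧ Φ w i ≤ mmG Φ Sl Su i xu xl := by
  intro w hw i
  have hwl : ∀ j, xl j ≤ w j := fun j => hw.1 j
  have hwu : ∀ j, w j ≤ xu j := fun j => hw.2 j
  set b : Fin n → ℝ := fun j => if 0 ≤ (Sl i j + Su i j) / 2 then Sl i j else Su i j with hb
  constructor
  · -- lower bound
    set z := mmVertex Sl Su i xl xu with hzdef
    have hz : z ∈ Set.Icc xl xu := by
      constructor <;> intro j <;> simp only [hzdef, mmVertex] <;> split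
      · exact le_refl _
      · exact hx j
      · exact hx j
      · exact le_refl _
    have hcore := mm_core xl xu (fun x => Φ x i) b w z hw hz (by
      intro x hxm
      obtain ⟨L, hL, hLb⟩ := hΦ x hxm i
      refine ⟨L, hL, fun j => ?_⟩
      simp only [hb, hzdef, mmVertex]
      split_ifs with h
      · exact mul_le_mul_of_nonneg_right (hLb j).1 (by linarith [hwl j])
      · exact mul_le_mul_of_nonpos_right (hLb j).2 (by linarith [hwu j]))
    have hsum : ∑ j, mmAlpha Sl Su i j * (xl j - xu j) ≤ ∑ j, b j * (w j - z j) := by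
      refine Finset.sum_le_sum fun j _ => ?_
      simp only [hb, hzdef, mmVertex, mmAlpha]
      split_ifs with h
      · nlinarith [le_max_left 0 (-Sl i j), le_max_right 0 (-Sl i j), hwl j, hwu j, hx j,
          mul_nonneg (le_max_left 0 (-Sl i j)) (sub_nonneg.2 (hwu j)),
          mul_nonneg (by linarith [le_max_right 0 (-Sl i j)] : (0:ℝ) ≤ max 0 (-Sl i j) + Sl i j)
            (sub_nonneg.2 (hwl j))]
      · nlinarith [le_max_left 0 (Su i j), hwl j, hwu j, hx j,
          mul_nonneg (le_max_left 0 (Su i j)) (sub_nonneg.2 (hwl j)),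
          mul_nonneg (by linarith [le_max_right 0 (Su i j)] : (0:ℝ) ≤ max 0 (Su i j) - Su i j)
            (sub_nonneg.2 (hwu j))]
    simp only [mmG]
    linarith
  · -- upper bound
    set z := mmVertex Sl Su i xu xl with hzdef
    have hz : z ∈ Set.Icc xl xu := by
      constructor <;> intro j <;> simp only [hzdef, mmVertex] <;> split
      · exact hx j
      · exact le_refl _
      · exact le_refl _
      · exact hx j
    have hcore := mm_core xl xu (fun x => Φ x i) b z w hz hw (by
      intro x hxm
      obtain ⟨L, hL, hLb⟩ := hΦ x hxm i
      refine ⟨L, hL, fun j => ?_⟩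
      simp only [hb, hzdef, mmVertex]
      split_ifs with h
      · exact mul_le_mul_of_nonneg_right (hLb j).1 (by linarith [hwu j])
      · exact mul_le_mul_of_nonpos_right (hLb j).2 (by linarith [hwl j]))
    have hsum : ∑ j, (- (mmAlpha Sl Su i j * (xu j - xl j))) ≤ ∑ j, b j * (z j - w j) := by
      refine Finset.sum_le_sum fun j _ => ?_
      simp only [hb, hzdef, mmVertex, mmAlpha]
      split_ifs with h
      · nlinarith [le_max_left 0 (-Sl i j), hwl j, hwu j, hx j,
          mul_nonneg (le_max_left 0 (-Sl i j)) (sub_nonneg.2 (hwl j)),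
          mul_nonneg (by linarith [le_max_right 0 (-Sl i j)] : (0:ℝ) ≤ max 0 (-Sl i j) + Sl i j)
            (sub_nonneg.2 (hwu j))]
      · nlinarith [le_max_left 0 (Su i j), hwl j, hwu j, hx j,
          mul_nonneg (le_max_left 0 (Su i j)) (sub_nonneg.2 (hwu j)),
          mul_nonneg (by linarith [le_max_right 0 (Su i j)] : (0:ℝ) ≤ max 0 (Su i j) - Su i j)
            (sub_nonneg.2 (hwl j))]
    rw [Finset.sum_neg_distrib] at hsum
    simp only [mmG]
    linarith
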